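/- With F and (x_n) as above (an equilibrium configuration for a strictly decreasing positive force function F), if there exists an index m such that x_{m+1} - x_m ≤ x_{k+1} - x_k for all k ∈ ℤ (a minimal gap is attained), then x_{k+1} - x_k is constant, i.e. the configuration is an arithmetic progression. -/

import Mathlib

private def eqLft (n : ℤ) : ℕ ≃ {k : ℤ // k < n} where
  toFun j := ⟨n - 1 - (j : ℤ), by omega⟩
  invFun k := (n - 1 - k.1).toNat
  left_inv := fun j => by
    show (n - 1 - (n - 1 - (j : ℤ))).toNat = j
    omega
  right_inv := fun k => by
    apply Subtype.ext
    show n - 1 - ((n - 1 - k.1).toNat : ℤ) = k.1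
    have := k.2
    omega

private def eqRgt (n : ℤ) : ℕ ≃ {k : ℤ // n < k} where
  toFun j := ⟨n + 1 + (j : ℤ), by omega⟩
  invFun k := (k.1 - n - 1).toNat
  left_inv := fun j => by
    show (n + 1 + (j : ℤ) - n - 1).toNat = j
    omega
  right_inv := fun k => by
    apply Subtype.ext
    show n + 1 + ((k.1 - n - 1).toNat : ℤ) = k.1
    have := k.2
    omega

/-- Telescoping bound: for a sequence with gaps at least `g`, the sum of the
drops `F (e j) - F (g + e j)` is at most `F (e 0)`. -/
private lemma tsum_delta_le (F : ℝ → ℝ)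
    (hFpos : ∀ d, 0 < d → 0 < F d)
    (hFanti : ∀ a b, 0 < a → a < b → F b < F a)
    (g : ℝ) (hg : 0 < g) (e : ℕ → ℝ)
    (he0 : 0 < e 0) (hstep : ∀ j, e j + g ≤ e (j + 1))
    (hS : Summable (fun j => F (e j) - F (g + e j))) :
    (∑' j, (F (e j) - F (g + e j))) ≤ F (e 0) := by
  have hFle : ∀ a b : ℝ, 0 < a → a ≤ b → F b ≤ F a := by
    intro a b ha hab
    rcases eq_or_lt_of_le hab with h | h
    · rw [h]
    · exact le_of_lt (hFanti a b ha h)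
  have hepos : ∀ j, 0 < e j := by
    intro j
    induction j with
    | zero => exact he0
    | succ j ih => have := hstep j; linarith
  have hpart : ∀ J : ℕ, (∑ j ∈ Finset.range (J + 1), (F (e j) - F (g + e j)))
      ≤ F (e 0) - F (g + e J) := by
    intro J
    induction J with
    | zero => simp
    | succ J ih =>
      rw [Finset.sum_range_succ]
      have h1 : F (e (J + 1)) ≤ F (g + e J) :=
        hFle _ _ (by have := hepos J; linarith) (by have := hstep J; linarith)
      linarith
  apply Summable.tsum_le_of_sum_range_le hS
  intro n
  cases n with
  | zero => simpa using le_of_lt (hFpos _ he0)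
  | succ J =>
    have h1 := hpart J
    have h2 : 0 < F (g + e J) := hFpos _ (by have := hepos J; linarith)
    linarith

set_option maxHeartbeats 2000000 in
private lemma gap_key (F : ℝ → ℝ)
    (hFpos : ∀ d, 0 < d → 0 < F d)
    (hFanti : ∀ a b, 0 < a → a < b → F b < F a)
    (x : ℤ → ℝ) (hx : StrictMono x)
    (hsumL : ∀ n : ℤ, Summable (fun k : {k : ℤ // k < n} => F (x n - x k.1)))
    (hsumR : ∀ n : ℤ, Summable (fun k : {k : ℤ // n < k} => F (x k.1 - x n)))
    (heq : ∀ n : ℤ,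
      (∑' k : {k : ℤ // k < n}, F (x n - x k.1)) =
      (∑' k : {k : ℤ // n < k}, F (x k.1 - x n)))
    (m : ℤ) (hmin : ∀ k : ℤ, x (m + 1) - x m ≤ x (k + 1) - x k) :
    x (m + 2) - x (m + 1) = x (m + 1) - x m ∧ x m - x (m - 1) = x (m + 1) - x m := by
  have hg : 0 < x (m + 1) - x m := sub_pos.2 (hx (lt_add_one m))
  have hFle : ∀ a b : ℝ, 0 < a → a ≤ b → F b ≤ F a := by
    intro a b ha hab
    rcases eq_or_lt_of_le hab with h | h
    · rw [h]
    · exact le_of_lt (hFanti a b ha h)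
  -- the two reindexed series at m
  have SLe : Summable (fun j : ℕ => F (x m - x (m - 1 - (j : ℤ)))) := by
    have h := (Equiv.summable_iff (eqLft m)
      (f := fun k : {k : ℤ // k < m} => F (x m - x k.1))).2 (hsumL m)
    exact h
  have SRm : Summable (fun j : ℕ => F (x (m + 1 + (j : ℤ)) - x m)) := by
    have h := (Equiv.summable_iff (eqRgt m)
      (f := fun k : {k : ℤ // m < k} => F (x k.1 - x m))).2 (hsumR m)
    exact h
  have SLm1 : Summable (fun j : ℕ => F (x (m + 1) - x (m + 1 - 1 - (j : ℤ)))) := by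
    have h := (Equiv.summable_iff (eqLft (m + 1))
      (f := fun k : {k : ℤ // k < m + 1} => F (x (m + 1) - x k.1))).2 (hsumL (m + 1))
    exact h
  have SRm1 : Summable (fun j : ℕ => F (x (m + 1 + 1 + (j : ℤ)) - x (m + 1))) := by
    have h := (Equiv.summable_iff (eqRgt (m + 1))
      (f := fun k : {k : ℤ // m + 1 < k} => F (x k.1 - x (m + 1)))).2 (hsumR (m + 1))
    exact h
  -- shifted versions
  have fge : (fun j : ℕ => F (x (m + 1) - x (m + 1 - 1 - ((j + 1 : ℕ) : ℤ))))
      = fun j : ℕ => F (x (m + 1) - x (m - 1 - (j : ℤ))) := by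
    funext j
    rw [show ((j + 1 : ℕ) : ℤ) = (j : ℤ) + 1 from by push_cast; ring,
      show m + 1 - 1 - ((j : ℤ) + 1) = m - 1 - (j : ℤ) from by ring]
  have SgE : Summable (fun j : ℕ => F (x (m + 1) - x (m - 1 - (j : ℤ)))) := by
    rw [← fge]
    exact ((summable_nat_add_iff 1).2 SLm1)
  have fgd : (fun j : ℕ => F (x (m + 1 + ((j + 1 : ℕ) : ℤ)) - x m))
      = fun j : ℕ => F (x (m + 2 + (j : ℤ)) - x m) := by
    funext j
    rw [show ((j + 1 : ℕ) : ℤ) = (j : ℤ) + 1 from by push_cast; ring,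
      show m + 1 + ((j : ℤ) + 1) = m + 2 + (j : ℤ) from by ring]
  have SgD : Summable (fun j : ℕ => F (x (m + 2 + (j : ℤ)) - x m)) := by
    rw [← fgd]
    exact ((summable_nat_add_iff 1).2 SRm)
  have fdd : (fun j : ℕ => F (x (m + 1 + 1 + (j : ℤ)) - x (m + 1)))
      = fun j : ℕ => F (x (m + 2 + (j : ℤ)) - x (m + 1)) := by
    funext j
    rw [show m + 1 + 1 + (j : ℤ) = m + 2 + (j : ℤ) from by ring]
  have SD : Summable (fun j : ℕ => F (x (m + 2 + (j : ℤ)) - x (m + 1))) := by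
    rw [← fdd]; exact SRm1
  -- equation (A): sum over left of m  =  F g + sum of F (x (m+2+j) - x m)
  have EqA : (∑' j : ℕ, F (x m - x (m - 1 - (j : ℤ))))
      = F (x (m + 1) - x m) + ∑' j : ℕ, F (x (m + 2 + (j : ℤ)) - x m) := by
    have h1 : (∑' k : {k : ℤ // k < m}, F (x m - x k.1))
        = ∑' j : ℕ, F (x m - x (m - 1 - (j : ℤ))) := by
      rw [← Equiv.tsum_eq (eqLft m) (fun k : {k : ℤ // k < m} => F (x m - x k.1))]; rfl
    have h2 : (∑' k : {k : ℤ // m < k}, F (x k.1 - x m))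
        = ∑' j : ℕ, F (x (m + 1 + (j : ℤ)) - x m) := by
      rw [← Equiv.tsum_eq (eqRgt m) (fun k : {k : ℤ // m < k} => F (x k.1 - x m))]; rfl
    have h3 := Summable.tsum_eq_zero_add SRm
    rw [← h1, ← fgd] at *
    rw [heq m, h2, h3]
    norm_num
  -- equation (B)
  have EqB : F (x (m + 1) - x m) + (∑' j : ℕ, F (x (m + 1) - x (m - 1 - (j : ℤ))))
      = ∑' j : ℕ, F (x (m + 2 + (j : ℤ)) - x (m + 1)) := by
    have h1 : (∑' k : {k : ℤ // k < m + 1}, F (x (m + 1) - x k.1))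
        = ∑' j : ℕ, F (x (m + 1) - x (m + 1 - 1 - (j : ℤ))) := by
      rw [← Equiv.tsum_eq (eqLft (m + 1)) (fun k : {k : ℤ // k < m + 1} => F (x (m + 1) - x k.1))]
      rfl
    have h2 : (∑' k : {k : ℤ // m + 1 < k}, F (x k.1 - x (m + 1)))
        = ∑' j : ℕ, F (x (m + 1 + 1 + (j : ℤ)) - x (m + 1)) := by
      rw [← Equiv.tsum_eq (eqRgt (m + 1)) (fun k : {k : ℤ // m + 1 < k} => F (x k.1 - x (m + 1)))]
      rfl
    have h3 := Summable.tsum_eq_zero_add SLm1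
    rw [fge] at h3
    have h4 : x (m + 1 - 1 - ((0 : ℕ) : ℤ)) = x m := by norm_num
    have h5 := heq (m + 1)
    rw [h1, h3, h4, h2, fdd] at h5
    exact h5
  -- difference sums
  have SDe : Summable (fun j : ℕ =>
      F (x m - x (m - 1 - (j:ℤ))) - F (x (m+1) - x (m - 1 - (j:ℤ)))) := SLe.sub SgE
  have SDd : Summable (fun j : ℕ =>
      F (x (m + 2 + (j:ℤ)) - x (m+1)) - F (x (m + 2 + (j:ℤ)) - x m)) := SD.sub SgD
  have tDe := Summable.tsum_sub SLe SgE
  have tDd := Summable.tsum_sub SD SgD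
  have key2 : (∑' j : ℕ, (F (x m - x (m - 1 - (j:ℤ))) - F (x (m+1) - x (m - 1 - (j:ℤ)))))
      + (∑' j : ℕ, (F (x (m + 2 + (j:ℤ)) - x (m+1)) - F (x (m + 2 + (j:ℤ)) - x m)))
      = 2 * F (x (m+1) - x m) := by
    rw [tDe, tDd]; linarith [EqA, EqB]
  -- pointwise identities
  have hpte : ∀ j : ℕ, F ((x (m+1) - x m) + (x m - x (m - 1 - (j:ℤ))))
      = F (x (m+1) - x (m - 1 - (j:ℤ))) := by
    intro j; congr 1; ring
  have hptd : ∀ j : ℕ, F ((x (m+1) - x m) + (x (m + 2 + (j:ℤ)) - x (m+1)))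
      = F (x (m + 2 + (j:ℤ)) - x m) := by
    intro j; congr 1; ring
  -- gap steps
  have hestep : ∀ j : ℕ, (x m - x (m - 1 - (j:ℤ))) + (x (m+1) - x m)
      ≤ x m - x (m - 1 - ((j+1:ℕ):ℤ)) := by
    intro j
    have h := hmin (m - 2 - (j:ℤ))
    have h1 : x (m - 2 - (j:ℤ) + 1) = x (m - 1 - (j:ℤ)) := by
      rw [show m - 2 - (j:ℤ) + 1 = m - 1 - (j:ℤ) from by ring]
    have h2 : x (m - 1 - ((j+1:ℕ):ℤ)) = x (m - 2 - (j:ℤ)) := by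
      rw [show ((j+1:ℕ):ℤ) = (j:ℤ)+1 from by push_cast; ring,
        show m - 1 - ((j:ℤ)+1) = m - 2 - (j:ℤ) from by ring]
    linarith
  have hdstep : ∀ j : ℕ, (x (m + 2 + (j:ℤ)) - x (m+1)) + (x (m+1) - x m)
      ≤ x (m + 2 + ((j+1:ℕ):ℤ)) - x (m+1) := by
    intro j
    have h := hmin (m + 2 + (j:ℤ))
    have h1 : x (m + 2 + ((j+1:ℕ):ℤ)) = x (m + 2 + (j:ℤ) + 1) := by
      rw [show ((j+1:ℕ):ℤ) = (j:ℤ)+1 from by push_cast; ring,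
        show m + 2 + ((j:ℤ)+1) = m + 2 + (j:ℤ) + 1 from by ring]
    linarith
  -- positivity of first terms
  have he0pos : (0:ℝ) < x m - x (m - 1 - ((0:ℕ):ℤ)) := by
    have hlt : m - 1 - ((0:ℕ):ℤ) < m := by omega
    exact sub_pos.2 (hx hlt)
  have hd0pos : (0:ℝ) < x (m + 2 + ((0:ℕ):ℤ)) - x (m+1) := by
    have hlt : m + 1 < m + 2 + ((0:ℕ):ℤ) := by omega
    exact sub_pos.2 (hx hlt)
  -- apply the telescoping bound
  have hDe_le : (∑' j : ℕ, (F (x m - x (m - 1 - (j:ℤ))) - F (x (m+1) - x (m - 1 - (j:ℤ)))))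
      ≤ F (x m - x (m - 1 - ((0:ℕ):ℤ))) := by
    have hs : Summable (fun j : ℕ => F (x m - x (m - 1 - (j:ℤ)))
        - F ((x (m+1) - x m) + (x m - x (m - 1 - (j:ℤ))))) :=
      SDe.congr (fun j => by rw [hpte j])
    have := tsum_delta_le F hFpos hFanti (x (m+1) - x m) hg
      (fun j => x m - x (m - 1 - (j:ℤ))) he0pos hestep hs
    have heqt : (∑' j : ℕ, (F (x m - x (m - 1 - (j:ℤ)))
        - F ((x (m+1) - x m) + (x m - x (m - 1 - (j:ℤ))))))
        = ∑' j : ℕ, (F (x m - x (m - 1 - (j:ℤ))) - F (x (m+1) - x (m - 1 - (j:ℤ)))) :=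
      tsum_congr (fun j => by rw [hpte j])
    rw [heqt] at this
    exact this
  have hDd_le : (∑' j : ℕ, (F (x (m + 2 + (j:ℤ)) - x (m+1)) - F (x (m + 2 + (j:ℤ)) - x m)))
      ≤ F (x (m + 2 + ((0:ℕ):ℤ)) - x (m+1)) := by
    have hs : Summable (fun j : ℕ => F (x (m + 2 + (j:ℤ)) - x (m+1))
        - F ((x (m+1) - x m) + (x (m + 2 + (j:ℤ)) - x (m+1)))) :=
      SDd.congr (fun j => by rw [hptd j])
    have := tsum_delta_le F hFpos hFanti (x (m+1) - x m) hg
      (fun j => x (m + 2 + (j:ℤ)) - x (m+1)) hd0pos hdstep hs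
    have heqt : (∑' j : ℕ, (F (x (m + 2 + (j:ℤ)) - x (m+1))
        - F ((x (m+1) - x m) + (x (m + 2 + (j:ℤ)) - x (m+1)))))
        = ∑' j : ℕ, (F (x (m + 2 + (j:ℤ)) - x (m+1)) - F (x (m + 2 + (j:ℤ)) - x m)) :=
      tsum_congr (fun j => by rw [hptd j])
    rw [heqt] at this
    exact this
  -- minimality of the gap
  have he0g : x (m+1) - x m ≤ x m - x (m - 1 - ((0:ℕ):ℤ)) := by
    have h := hmin (m - 1)
    have h1 : x (m - 1 + 1) = x m := by rw [show m - 1 + 1 = m from by ring]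
    have h2 : x (m - 1 - ((0:ℕ):ℤ)) = x (m - 1) := by
      rw [show m - 1 - ((0:ℕ):ℤ) = m - 1 from by push_cast; ring]
    linarith
  have hd0g : x (m+1) - x m ≤ x (m + 2 + ((0:ℕ):ℤ)) - x (m+1) := by
    have h := hmin (m + 1)
    have h1 : x (m + 1 + 1) = x (m + 2 + ((0:ℕ):ℤ)) := by
      rw [show m + 1 + 1 = m + 2 + ((0:ℕ):ℤ) from by push_cast; ring]
    linarith
  have hFe0 : F (x m - x (m - 1 - ((0:ℕ):ℤ))) ≤ F (x (m+1) - x m) := hFle _ _ hg he0g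
  have hFd0 : F (x (m + 2 + ((0:ℕ):ℤ)) - x (m+1)) ≤ F (x (m+1) - x m) := hFle _ _ hg hd0g
  have h6 : F (x m - x (m - 1 - ((0:ℕ):ℤ))) = F (x (m+1) - x m) := by linarith
  have h7 : F (x (m + 2 + ((0:ℕ):ℤ)) - x (m+1)) = F (x (m+1) - x m) := by linarith
  have h8 : x m - x (m - 1 - ((0:ℕ):ℤ)) = x (m+1) - x m := by
    by_contra hne
    have hlt : x (m+1) - x m < x m - x (m - 1 - ((0:ℕ):ℤ)) :=
      lt_of_le_of_ne he0g (fun h => hne h.symm)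
    have := hFanti _ _ hg hlt
    linarith
  have h9 : x (m + 2 + ((0:ℕ):ℤ)) - x (m+1) = x (m+1) - x m := by
    by_contra hne
    have hlt : x (m+1) - x m < x (m + 2 + ((0:ℕ):ℤ)) - x (m+1) :=
      lt_of_le_of_ne hd0g (fun h => hne h.symm)
    have := hFanti _ _ hg hlt
    linarith
  constructor
  · rw [show m + 2 + ((0:ℕ):ℤ) = m + 2 from by push_cast; ring] at h9
    exact h9
  · rw [show m - 1 - ((0:ℕ):ℤ) = m - 1 from by push_cast; ring] at h8
    exact h8


/-- An equilibrium configuration with a minimal gap is an arithmetic progression. -/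
theorem stmt_1 (F : ℝ → ℝ)
    (hFpos : ∀ d, 0 < d → 0 < F d)
    (hFanti : ∀ a b, 0 < a → a < b → F b < F a)
    (x : ℤ → ℝ) (hx : StrictMono x)
    (hsumL : ∀ n : ℤ, Summable (fun k : {k : ℤ // k < n} => F (x n - x k.1)))
    (hsumR : ∀ n : ℤ, Summable (fun k : {k : ℤ // n < k} => F (x k.1 - x n)))
    (heq : ∀ n : ℤ,
      (∑' k : {k : ℤ // k < n}, F (x n - x k.1)) =
      (∑' k : {k : ℤ // n < k}, F (x k.1 - x n)))
    (m : ℤ) (hmin : ∀ k : ℤ, x (m + 1) - x m ≤ x (k + 1) - x k) :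
    ∀ k : ℤ, x (k + 1) - x k = x 1 - x 0 := by
  have key := gap_key F hFpos hFanti x hx hsumL hsumR heq
  have P : ∀ k : ℤ, (∀ k' : ℤ, x (k + 1) - x k ≤ x (k' + 1) - x k') ∧
      x (k + 1) - x k = x (m + 1) - x m := by
    intro k
    rcases le_or_gt m k with hk | hk
    · refine Int.le_induction (motive := fun k _ => (∀ k' : ℤ, x (k + 1) - x k ≤ x (k' + 1) - x k') ∧
        x (k + 1) - x k = x (m + 1) - x m) ⟨hmin, rfl⟩ ?_ k hk
      intro n _ ih
      have h := key n ih.1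
      have h1 : x (n + 1 + 1) = x (n + 2) := by rw [show n + 1 + 1 = n + 2 from by ring]
      have hgap2 : x (n + 1 + 1) - x (n + 1) = x (m + 1) - x m := by
        rw [h1, h.1]; exact ih.2
      exact ⟨fun k' => by rw [hgap2]; exact hmin k', hgap2⟩
    · refine Int.le_induction_down (motive := fun k _ => (∀ k' : ℤ, x (k + 1) - x k ≤ x (k' + 1) - x k') ∧
        x (k + 1) - x k = x (m + 1) - x m) ⟨hmin, rfl⟩ ?_ k (le_of_lt hk)
      intro n _ ih
      have h := key n ih.1
      have h1 : x (n - 1 + 1) = x n := by rw [show n - 1 + 1 = n from by ring]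
      have hgap2 : x (n - 1 + 1) - x (n - 1) = x (m + 1) - x m := by
        rw [h1, h.2]; exact ih.2
      exact ⟨fun k' => by rw [hgap2]; exact hmin k', hgap2⟩
  intro k
  have h1 := (P k).2
  have h2 := (P 0).2
  norm_num at h2
  rw [h1, ← h2]
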